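/- Lemma 2 (reversed-KL optimization has the same structural solution): let ε > 0 and let ã be the reverse embedding factor. Then the set of real numbers { Real.log (det Σs) : (μs, Σs) D′-feasible } has greatest element n · Real.log ã + Real.log (det Σc), and this greatest value is attained at the D′-feasible pair μs = μc, Σs = ã • Σc; i.e., the optimal stego-parameters for the reversed KL divergence have the same form μs = μc and Σs proportional to Σc as in the forward case. -/

import Mathlib

open Matrix

/-- trace of a real hermitian matrix = sum of eigenvalues -/
lemma aux_trace_eq_sum_eigenvalues {m : ℕ} {A : Matrix (Fin m) (Fin m) ℝ}
    (hA : A.IsHermitian) : A.trace = ∑ i, hA.eigenvalues i := by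
  simpa using hA.trace_eq_sum_eigenvalues

/-- key scalar-matrix inequality: log det ≤ trace − n for positive definite matrices -/
lemma aux_log_det_le {m : ℕ} {B : Matrix (Fin m) (Fin m) ℝ} (hB : B.PosDef) :
    Real.log B.det ≤ B.trace - m := by
  have hdet : B.det = ∏ i, hB.1.eigenvalues i := by
    simpa using hB.1.det_eq_prod_eigenvalues
  have htr := aux_trace_eq_sum_eigenvalues hB.1
  rw [hdet, htr, Real.log_prod (fun i _ => (hB.eigenvalues_pos i).ne')]
  have : ∀ i ∈ Finset.univ, Real.log (hB.1.eigenvalues i) ≤ hB.1.eigenvalues i - 1 :=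
    fun i _ => Real.log_le_sub_one_of_pos (hB.eigenvalues_pos i)
  calc ∑ i, Real.log (hB.1.eigenvalues i) ≤ ∑ i, (hB.1.eigenvalues i - 1) :=
        Finset.sum_le_sum this
    _ = (∑ i, hB.1.eigenvalues i) - m := by rw [Finset.sum_sub_distrib]; simp

lemma aux_posDef_smul {m : ℕ} {A : Matrix (Fin m) (Fin m) ℝ} (hA : A.PosDef)
    {a : ℝ} (ha : 0 < a) : (a • A).PosDef := by
  refine Matrix.posDef_iff_dotProduct_mulVec.mpr ⟨?_, fun x hx => ?_⟩
  · unfold Matrix.IsHermitian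
    rw [Matrix.conjTranspose_smul, hA.1.eq]
    simp
  · rw [Matrix.smul_mulVec, dotProduct_smul]
    exact mul_pos ha ((Matrix.posDef_iff_dotProduct_mulVec.mp hA).2 hx)

lemma aux_posDef_conj {m : ℕ} {A S : Matrix (Fin m) (Fin m) ℝ} (hA : A.PosDef)
    (hS : S.IsHermitian) (hSu : IsUnit S) : (S * A * S).PosDef := by
  refine Matrix.posDef_iff_dotProduct_mulVec.mpr ⟨?_, fun x hx => ?_⟩
  · unfold Matrix.IsHermitian
    rw [Matrix.conjTranspose_mul, Matrix.conjTranspose_mul, hA.1.eq, hS.eq, Matrix.mul_assoc]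
  · have hx' : S *ᵥ x ≠ 0 := by
      intro h
      have h2 : S *ᵥ x = S *ᵥ 0 := by simpa using h
      exact hx ((Matrix.mulVec_injective_iff_isUnit.mpr hSu) h2)
    have := (Matrix.posDef_iff_dotProduct_mulVec.mp hA).2 hx'
    have key : star x ⬝ᵥ ((S * A * S) *ᵥ x) = star (S *ᵥ x) ⬝ᵥ (A *ᵥ (S *ᵥ x)) := by
      rw [← Matrix.mulVec_mulVec, ← Matrix.mulVec_mulVec, Matrix.dotProduct_mulVec,
        Matrix.star_mulVec, hS.eq, Matrix.dotProduct_mulVec]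
    rwa [key]

/-- The reversed Gaussian KL expression. -/
noncomputable def klGaussRev {n : ℕ} (Sc : Matrix (Fin n) (Fin n) ℝ) (μc : Fin n → ℝ)
    (Ss : Matrix (Fin n) (Fin n) ℝ) (μs : Fin n → ℝ) : ℝ :=
  (1 / 2) * ((Ss⁻¹ * Sc).trace + (μs - μc) ⬝ᵥ (Ss⁻¹ *ᵥ (μs - μc))
    + Real.log (Ss.det / Sc.det) - n)

open scoped MatrixOrder in
/-- Lemma 2 (reversed-KL optimization has the same structural solution):
the set of `log det Σs` over D′-feasible pairs has greatest element
`n · log ã + log det Σc`, attained at `μs = μc`, `Σs = ã • Σc`. -/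
theorem klGaussRev_max_logdet {n : ℕ} (hn : 1 ≤ n)
    (Sc : Matrix (Fin n) (Fin n) ℝ) (hSc : Sc.PosDef) (μc : Fin n → ℝ)
    (ε : ℝ) (hε : 0 < ε)
    (atilde : ℝ) (hatilde1 : 1 ≤ atilde)
    (hatilde : 1 / atilde + Real.log atilde - 1 = 4 * ε ^ 2 / n) :
    IsGreatest
        {x : ℝ | ∃ (μs : Fin n → ℝ) (Ss : Matrix (Fin n) (Fin n) ℝ),
          Ss.PosDef ∧ klGaussRev Sc μc Ss μs ≤ 2 * ε ^ 2 ∧ x = Real.log Ss.det}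
        ((n : ℝ) * Real.log atilde + Real.log Sc.det) ∧
      (atilde • Sc).PosDef ∧ klGaussRev Sc μc (atilde • Sc) μc ≤ 2 * ε ^ 2 ∧
        Real.log (atilde • Sc).det = (n : ℝ) * Real.log atilde + Real.log Sc.det := by
  have hapos : (0:ℝ) < atilde := lt_of_lt_of_le one_pos hatilde1
  have hdetSc : 0 < Sc.det := hSc.det_pos
  have hnR : (0:ℝ) < (n:ℝ) := by exact_mod_cast hn
  have hcard : Fintype.card (Fin n) = n := Fintype.card_fin n
  -- value of the log-det at the candidate point
  have hlogdet : Real.log (atilde • Sc).det = (n : ℝ) * Real.log atilde + Real.log Sc.det := by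
    rw [Matrix.det_smul, hcard, Real.log_mul (pow_ne_zero _ hapos.ne') hdetSc.ne', Real.log_pow]
  -- posdef of the candidate point
  have hsmulPD : (atilde • Sc).PosDef := aux_posDef_smul hSc hapos
  -- n * (1/ã + log ã − 1) = 4 ε²
  have h4 : (n:ℝ) * (1 / atilde + Real.log atilde - 1) = 4 * ε ^ 2 := by
    rw [hatilde]; field_simp
  have hgt : 1 < atilde := by
    rcases lt_or_eq_of_le hatilde1 with h | h
    · exact h
    · exfalso
      have h0 : 1 / atilde + Real.log atilde - 1 = 0 := by rw [← h]; simp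
      have hpos : 0 < 4 * ε ^ 2 / (n:ℝ) := by positivity
      rw [hatilde] at h0
      linarith
  -- value of the KL at the candidate point
  have hval : klGaussRev Sc μc (atilde • Sc) μc = 2 * ε ^ 2 := by
    have hScu : IsUnit Sc.det := isUnit_iff_ne_zero.mpr hdetSc.ne'
    have hinst : Invertible atilde := invertibleOfNonzero hapos.ne'
    have hinv : (atilde • Sc)⁻¹ = atilde⁻¹ • Sc⁻¹ := by
      refine Matrix.inv_eq_left_inv ?_
      rw [Matrix.smul_mul, Matrix.mul_smul, Matrix.nonsing_inv_mul Sc hScu, smul_smul,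
        inv_mul_cancel₀ hapos.ne', one_smul]
    unfold klGaussRev
    rw [hinv, Matrix.smul_mul, Matrix.nonsing_inv_mul Sc hScu, Matrix.trace_smul,
      Matrix.trace_one, hcard, sub_self, zero_dotProduct, Matrix.det_smul, hcard,
      mul_div_assoc, div_self hdetSc.ne', mul_one, Real.log_pow]
    have : atilde⁻¹ * (n:ℝ) + (n:ℝ) * Real.log atilde - (n:ℝ) = 4 * ε ^ 2 := by
      have h1a : atilde⁻¹ = 1 / atilde := (one_div atilde).symm
      rw [h1a]; linarith [h4, mul_comm ((n:ℝ)) (1/atilde)]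
    simp only [smul_eq_mul] at *
    linarith [this]
  refine ⟨⟨⟨μc, atilde • Sc, hsmulPD, hval.le, hlogdet.symm⟩, ?_⟩, hsmulPD, hval.le, hlogdet⟩
  -- upper bound
  rintro x ⟨μs, Ss, hSs, hfeas, rfl⟩
  have hdetSs : 0 < Ss.det := hSs.det_pos
  set L := Real.log Ss.det - Real.log Sc.det with hL
  set Lm := Real.log atilde with hLm
  set t := (Ss⁻¹ * Sc).trace with ht'
  -- quadratic term is nonnegative
  have hq : 0 ≤ (μs - μc) ⬝ᵥ (Ss⁻¹ *ᵥ (μs - μc)) := by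
    have := (Matrix.posSemidef_iff_dotProduct_mulVec.mp hSs.inv.posSemidef).2 (μs - μc)
    simpa using this
  -- feasibility gives bound on trace
  have htb : t ≤ 4 * ε ^ 2 + (n:ℝ) - L := by
    unfold klGaussRev at hfeas
    rw [Real.log_div hdetSs.ne' hdetSc.ne'] at hfeas
    linarith [hfeas, hq]
  -- sqrt of Sc
  set S := CFC.sqrt Sc with hSdef
  have hSh : S.IsHermitian := (CFC.sqrt_nonneg Sc).posSemidef.1
  have hSS : S * S = Sc := CFC.sqrt_mul_sqrt_self Sc hSc.posSemidef.nonneg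
  have hdS : S.det * S.det = Sc.det := by rw [← Matrix.det_mul, hSS]
  have hSdet : S.det ≠ 0 := by
    intro h; rw [h, zero_mul] at hdS; exact hdetSc.ne' hdS.symm
  have hSu : IsUnit S := (Matrix.isUnit_iff_isUnit_det S).2 (isUnit_iff_ne_zero.mpr hSdet)
  set A := S * Ss⁻¹ * S with hAdef
  have hA : A.PosDef := aux_posDef_conj hSs.inv hSh hSu
  have hB : (atilde • A).PosDef := aux_posDef_smul hA hapos
  -- trace of A equals t
  have htrA : A.trace = t := by
    rw [hAdef, Matrix.trace_mul_comm, ← Matrix.mul_assoc, hSS, Matrix.trace_mul_comm, ht']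
  -- det of A
  have hdetA : A.det = Sc.det / Ss.det := by
    rw [hAdef, Matrix.det_mul, Matrix.det_mul, Matrix.det_nonsing_inv, Ring.inverse_eq_inv', ← hdS]
    field_simp
    try ring
  -- apply the key inequality to atilde • A
  have key := aux_log_det_le hB
  rw [Matrix.det_smul, hcard, Matrix.trace_smul, htrA, hdetA,
    Real.log_mul (pow_ne_zero _ hapos.ne') (by positivity), Real.log_pow,
    Real.log_div hdetSc.ne' hdetSs.ne'] at key
  simp only [smul_eq_mul] at key
  -- key : n * Lm + (log Sc.det - log Ss.det) ≤ atilde * t - n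
  have h5 : atilde * t ≤ atilde * (4 * ε ^ 2) + atilde * (n:ℝ) - atilde * L := by
    calc atilde * t ≤ atilde * (4 * ε ^ 2 + (n:ℝ) - L) :=
          mul_le_mul_of_nonneg_left htb hapos.le
      _ = atilde * (4 * ε ^ 2) + atilde * (n:ℝ) - atilde * L := by ring
  have h6 : atilde * (4 * ε ^ 2) = (n:ℝ) + (n:ℝ) * (atilde * Lm) - (n:ℝ) * atilde := by
    rw [← h4]; field_simp; try ring
  have hfin : (atilde - 1) * L ≤ (atilde - 1) * ((n:ℝ) * Lm) := by
    have hkey2 : (n:ℝ) * Lm - L ≤ atilde * t - (n:ℝ) := by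
      rw [hL, hLm]; linarith [key]
    nlinarith [hkey2, h5, h6]
  have hLle : L ≤ (n:ℝ) * Lm := le_of_mul_le_mul_left hfin (by linarith)
  rw [hL] at hLle
  linarith [hLle]
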